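/- Let 0 < α < 1, a, b ∈ ℝ with b ≠ 0, C₁, C₂ ∈ ℝ, and set λ = a + ib. Define x(t) = C₁ · Re(E_α(λ t^α)) + C₂ · Im(E_α(λ t^α)) and y(t) = −C₁ · Im(E_α(λ t^α)) + C₂ · Re(E_α(λ t^α)). Then x(0) = C₁, y(0) = C₂, and for every t > 0 the Caputo derivatives satisfy (₀^C D_t^α x)(t) = a·x(t) + b·y(t) and (₀^C D_t^α y)(t) = −b·x(t) + a·y(t). -/

import Mathlib

open MeasureTheory intervalIntegral

/-- The two-parameter Mittag-Leffler function `E_{α,β}(z) = ∑_{k=0}^∞ z^k / Γ(αk + β)`. -/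
noncomputable def mittagLeffler (α β : ℝ) (z : ℂ) : ℂ :=
  ∑' k : ℕ, z ^ k / Complex.Gamma (α * k + β)

/-- The Caputo fractional derivative of order `α ∈ (0,1)` of a real-valued function
(lower terminal `0`): `(₀^C D_t^α f)(t) = (1/Γ(1−α)) ∫₀^t (t−τ)^{−α} f′(τ) dτ`. -/
noncomputable def caputoDerivReal (α : ℝ) (f : ℝ → ℝ) (t : ℝ) : ℝ :=
  (1 / Real.Gamma (1 - α)) *
    ∫ τ in (0 : ℝ)..t, (t - τ) ^ (-α) * deriv f τ

section AuxiliaryLemmas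

open Filter Set


/-- Key summability: for any `C ≥ 0`, `∑ C^k (k+1)/Γ(αk+1) < ∞`. -/
lemma ml_summable_aux (α : ℝ) (hα₀ : 0 < α) (C : ℝ) (hC : 0 ≤ C) :
    Summable fun k : ℕ => C ^ k * (k + 1) / Real.Gamma (α * k + 1) := by
  set D : ℝ := 2 * C + 2 with hD
  have hD1 : 1 < D := by linarith
  have hD0 : (0:ℝ) < D := by linarith
  set E : ℝ := D ^ (2 / α) with hE
  have hE1 : 1 ≤ E := Real.one_le_rpow hD1.le (by positivity)
  -- eventually n! ≥ E^n
  have h1 : ∀ᶠ n : ℕ in atTop, E ^ n ≤ ((Nat.factorial n) : ℝ) := by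
    have := (Real.summable_pow_div_factorial E).tendsto_atTop_zero
    filter_upwards [this.eventually (eventually_le_nhds (show (0:ℝ) < 1 by norm_num))] with n hn
    have hfac : (0:ℝ) < ((Nat.factorial n):ℝ) := by positivity
    rw [div_le_one hfac] at hn
    exact hn.trans (by norm_num)
  -- eventually Γ(αk+1) ≥ D^k
  have h2 : ∀ᶠ k : ℕ in atTop, (D:ℝ) ^ k ≤ Real.Gamma (α * k + 1) := by
    have hfloor : Tendsto (fun k : ℕ => ⌊α * k⌋₊) atTop atTop := by
      exact tendsto_nat_floor_atTop.comp (Tendsto.const_mul_atTop hα₀ tendsto_natCast_atTop_atTop)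
    have h2' : ∀ᶠ k : ℕ in atTop, 2 ≤ α * k := by
      have := Tendsto.const_mul_atTop hα₀ (tendsto_natCast_atTop_atTop (R := ℝ))
      exact this.eventually_ge_atTop 2
    filter_upwards [hfloor.eventually h1, h2'] with k hk hk2
    have hfl : (⌊α * k⌋₊ : ℝ) ≤ α * k := Nat.floor_le (by linarith)
    have hfl2 : α * k - 1 ≤ (⌊α * k⌋₊ : ℝ) := by
      have := Nat.lt_floor_add_one (α * k)
      linarith
    -- Γ(αk+1) ≥ Γ(⌊αk⌋+1) = ⌊αk⌋!
    have hmono : Real.Gamma ((⌊α * k⌋₊ : ℝ) + 1) ≤ Real.Gamma (α * k + 1) := by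
      rcases eq_or_lt_of_le (by linarith : (⌊α * k⌋₊ : ℝ) + 1 ≤ α * k + 1) with h | h
      · rw [h]
      · exact (Real.Gamma_strictMonoOn_Ici (by simp; linarith) (by simp; linarith) h).le
    have hfac : Real.Gamma ((⌊α * k⌋₊ : ℝ) + 1) = ((Nat.factorial ⌊α * k⌋₊) : ℝ) := by
      exact_mod_cast Real.Gamma_nat_eq_factorial ⌊α * k⌋₊
    have key : (D:ℝ) ^ k ≤ E ^ ⌊α * k⌋₊ := by
      have : E ^ (⌊α * k⌋₊ : ℕ) = D ^ ((2/α) * ⌊α * k⌋₊) := by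
        rw [hE, ← Real.rpow_natCast (D ^ (2/α)) _, ← Real.rpow_mul hD0.le]
      rw [this, ← Real.rpow_natCast D k]
      apply Real.rpow_le_rpow_left_iff hD1 |>.mpr
      have : α * k - 1 ≥ α * k / 2 := by linarith
      have h3 : (2/α) * (⌊α * k⌋₊ : ℝ) ≥ (2/α) * (α * k / 2) := by
        apply mul_le_mul_of_nonneg_left (by linarith) (by positivity)
      calc (k:ℝ) = (2/α) * (α * k / 2) := by field_simp
        _ ≤ (2/α) * ⌊α * k⌋₊ := h3
    calc (D:ℝ)^k ≤ E ^ ⌊α * k⌋₊ := key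
      _ ≤ ((Nat.factorial ⌊α * k⌋₊) : ℝ) := hk
      _ = Real.Gamma ((⌊α * k⌋₊:ℝ) + 1) := hfac.symm
      _ ≤ Real.Gamma (α * k + 1) := hmono
  -- comparison with (k+1) * (C/D)^k
  have hsum : Summable fun k : ℕ => (k + 1 : ℝ) * (C / D) ^ k := by
    have hr : ‖C / D‖ < 1 := by
      rw [Real.norm_eq_abs, abs_of_nonneg (by positivity)]
      rw [div_lt_one hD0]; linarith
    have h1 := summable_pow_mul_geometric_of_norm_lt_one (R := ℝ) 1 hr
    have h2 := summable_geometric_of_norm_lt_one hr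
    simpa [add_mul, pow_one] using (h1.add h2)
  apply Summable.of_norm_bounded_eventually hsum
  rw [Nat.cofinite_eq_atTop]
  filter_upwards [h2] with k hk
  have hΓ : (0:ℝ) < Real.Gamma (α * k + 1) :=
    Real.Gamma_pos_of_pos (by positivity)
  rw [Real.norm_eq_abs, abs_of_nonneg (by positivity)]
  rw [div_le_iff₀ hΓ]
  have hDk : (0:ℝ) < D ^ k := by positivity
  calc C ^ k * (k+1) = (k+1) * (C/D)^k * D^k := by
        rw [div_pow, mul_assoc, div_mul_cancel₀ _ hDk.ne']; ring
    _ ≤ (k+1) * (C/D)^k * Real.Gamma (α * k + 1) := by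
        apply mul_le_mul_of_nonneg_left hk (by positivity)

/-- `k`-th term of `E_α(λ τ^α)` as a function of `τ`. -/
noncomputable def mlTerm (α : ℝ) (lam : ℂ) (k : ℕ) (τ : ℝ) : ℂ :=
  lam ^ k * ((τ ^ (α * k) : ℝ) : ℂ) / Complex.Gamma (α * k + 1)

/-- `k`-th term of the `τ`-derivative series. -/
noncomputable def mlDTerm (α : ℝ) (lam : ℂ) (k : ℕ) (τ : ℝ) : ℂ :=
  lam ^ k * ((α * k * τ ^ (α * k - 1) : ℝ) : ℂ) / Complex.Gamma (α * k + 1)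

lemma gamma_pos (α : ℝ) (hα₀ : 0 < α) (k : ℕ) : (0:ℝ) < Real.Gamma (α * k + 1) :=
  Real.Gamma_pos_of_pos (by positivity)

lemma gammaC_eq (α : ℝ) (k : ℕ) :
    Complex.Gamma ((α : ℂ) * (k : ℂ) + 1) = ((Real.Gamma (α * k + 1) : ℝ) : ℂ) := by
  rw [← Complex.Gamma_ofReal]; push_cast; ring_nf

lemma norm_mlTerm (α : ℝ) (hα₀ : 0 < α) (lam : ℂ) (k : ℕ) {τ : ℝ} (hτ : 0 ≤ τ) :
    ‖mlTerm α lam k τ‖ = ‖lam‖ ^ k * τ ^ (α * k) / Real.Gamma (α * k + 1) := by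
  rw [mlTerm, gammaC_eq]
  rw [norm_div, norm_mul, norm_pow, Complex.norm_real, Complex.norm_real]
  rw [Real.norm_eq_abs, Real.norm_eq_abs, abs_of_nonneg (Real.rpow_nonneg hτ _),
    abs_of_nonneg (gamma_pos α hα₀ k).le]

lemma norm_mlDTerm (α : ℝ) (hα₀ : 0 < α) (lam : ℂ) (k : ℕ) {τ : ℝ} (hτ : 0 ≤ τ) :
    ‖mlDTerm α lam k τ‖ = ‖lam‖ ^ k * (α * k * τ ^ (α * k - 1)) / Real.Gamma (α * k + 1) := by
  rw [mlDTerm, gammaC_eq]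
  rw [norm_div, norm_mul, norm_pow, Complex.norm_real, Complex.norm_real]
  rw [Real.norm_eq_abs, Real.norm_eq_abs,
    abs_of_nonneg (by positivity : (0:ℝ) ≤ α * k * τ ^ (α * k - 1)),
    abs_of_nonneg (gamma_pos α hα₀ k).le]

lemma mlTerm_bound (α : ℝ) (hα₀ : 0 < α) (lam : ℂ) (k : ℕ) {τ R : ℝ} (hτ : 0 ≤ τ) (hR : τ ≤ R) :
    ‖mlTerm α lam k τ‖ ≤ (‖lam‖ * R ^ α) ^ k * (k + 1) / Real.Gamma (α * k + 1) := by
  rw [norm_mlTerm α hα₀ lam k hτ]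
  have hR0 : 0 ≤ R := hτ.trans hR
  have h1 : τ ^ (α * k) ≤ R ^ (α * k) := Real.rpow_le_rpow hτ hR (by positivity)
  have h2 : R ^ (α * k) = (R ^ α) ^ k := by
    rw [Real.rpow_mul hR0, Real.rpow_natCast]
  have key : ‖lam‖ ^ k * τ ^ (α * k) ≤ (‖lam‖ * R ^ α) ^ k * (k + 1) := by
    calc ‖lam‖ ^ k * τ ^ (α * k) ≤ ‖lam‖ ^ k * (R ^ α) ^ k := by
          rw [← h2]; exact mul_le_mul_of_nonneg_left h1 (by positivity)
      _ = (‖lam‖ * R ^ α) ^ k * 1 := by rw [mul_pow, mul_one]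
      _ ≤ (‖lam‖ * R ^ α) ^ k * (k + 1) := by
          apply mul_le_mul_of_nonneg_left (by push_cast; linarith [Nat.cast_nonneg (α := ℝ) k])
            (by positivity)
  rw [div_le_div_iff₀ (gamma_pos α hα₀ k) (gamma_pos α hα₀ k)]
  exact mul_le_mul_of_nonneg_right key (gamma_pos α hα₀ k).le

lemma mlDTerm_bound (α : ℝ) (hα₀ : 0 < α) (lam : ℂ) (k : ℕ) {m τ R : ℝ} (hm : 0 < m)
    (hτ₁ : m ≤ τ) (hτ₂ : τ ≤ R) :
    ‖mlDTerm α lam k τ‖ ≤ α / m * ((‖lam‖ * R ^ α) ^ k * (k + 1) / Real.Gamma (α * k + 1)) := by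
  have hτ0 : 0 < τ := hm.trans_le hτ₁
  have hR0 : 0 ≤ R := hτ0.le.trans hτ₂
  rw [norm_mlDTerm α hα₀ lam k hτ0.le]
  have h1 : τ ^ (α * k - 1) ≤ R ^ (α * k) / m := by
    rw [Real.rpow_sub hτ0, Real.rpow_one]
    apply div_le_div₀ (by positivity) (Real.rpow_le_rpow hτ0.le hτ₂ (by positivity)) hm hτ₁
  have h2 : (R ^ α) ^ k = R ^ (α * k) := by
    rw [Real.rpow_mul hR0, Real.rpow_natCast]
  rw [← mul_div_assoc]
  have key : ‖lam‖ ^ k * (α * k * τ ^ (α * k - 1)) ≤ α / m * ((‖lam‖ * R ^ α) ^ k * (k + 1)) := by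
    calc ‖lam‖ ^ k * (α * ↑k * τ ^ (α * ↑k - 1))
        ≤ ‖lam‖ ^ k * (α * ↑k * (R ^ (α * ↑k) / m)) := by
          apply mul_le_mul_of_nonneg_left _ (by positivity)
          exact mul_le_mul_of_nonneg_left h1 (by positivity)
      _ = α / m * (‖lam‖ ^ k * R ^ (α * ↑k) * ↑k) := by ring
      _ ≤ α / m * (‖lam‖ ^ k * R ^ (α * ↑k) * (↑k + 1)) := by
          apply mul_le_mul_of_nonneg_left _ (by positivity)
          apply mul_le_mul_of_nonneg_left (by linarith) (by positivity)
      _ = α / m * ((‖lam‖ * R ^ α) ^ k * (↑k + 1)) := by rw [mul_pow, h2]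
  rw [div_le_div_iff₀ (gamma_pos α hα₀ k) (gamma_pos α hα₀ k)]
  exact mul_le_mul_of_nonneg_right key (gamma_pos α hα₀ k).le

lemma summable_mlTerm (α : ℝ) (hα₀ : 0 < α) (lam : ℂ) {τ : ℝ} (hτ : 0 ≤ τ) :
    Summable (fun k => mlTerm α lam k τ) := by
  apply Summable.of_norm_bounded (ml_summable_aux α hα₀ (‖lam‖ * τ ^ α) (by positivity))
  intro k
  exact mlTerm_bound α hα₀ lam k hτ le_rfl

lemma summable_mlDTerm (α : ℝ) (hα₀ : 0 < α) (lam : ℂ) {τ : ℝ} (hτ : 0 < τ) :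
    Summable (fun k => mlDTerm α lam k τ) := by
  apply Summable.of_norm_bounded
    ((ml_summable_aux α hα₀ (‖lam‖ * τ ^ α) (by positivity)).mul_left (α / τ))
  intro k
  exact mlDTerm_bound α hα₀ lam k hτ le_rfl le_rfl

lemma ml_eq_tsum (α : ℝ) (lam : ℂ) {τ : ℝ} (hτ : 0 ≤ τ) :
    mittagLeffler α 1 (lam * ((τ ^ α : ℝ) : ℂ)) = ∑' k, mlTerm α lam k τ := by
  rw [mittagLeffler]
  apply tsum_congr
  intro k
  have h : ((τ ^ α : ℝ) : ℂ) ^ k = ((τ ^ (α * k) : ℝ) : ℂ) := by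
    rw [← Complex.ofReal_pow, ← Real.rpow_natCast (τ ^ α) k, ← Real.rpow_mul hτ]
  rw [mlTerm, mul_pow, h]
  norm_num
lemma mlTerm_hasDerivAt (α : ℝ) (hα₀ : 0 < α) (lam : ℂ) (k : ℕ) {τ : ℝ} (hτ : 0 < τ) :
    HasDerivAt (fun u : ℝ => mlTerm α lam k u) (mlDTerm α lam k τ) τ := by
  have h1 : HasDerivAt (fun u : ℝ => u ^ (α * k)) (α * k * τ ^ (α * k - 1)) τ :=
    Real.hasDerivAt_rpow_const (Or.inl hτ.ne')
  have h2 := (h1.ofReal_comp).const_mul (lam ^ k / Complex.Gamma ((α:ℂ) * k + 1))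
  have heq : (fun u : ℝ => lam ^ k / Complex.Gamma ((α:ℂ) * k + 1) * ((u ^ (α * k) : ℝ) : ℂ))
      = fun u : ℝ => mlTerm α lam k u := by
    funext u; rw [mlTerm]; ring
  rw [heq] at h2
  refine h2.congr_deriv ?_
  rw [mlDTerm]; ring

lemma ml_hasDerivAt (α : ℝ) (hα₀ : 0 < α) (lam : ℂ) {τ : ℝ} (hτ : 0 < τ) :
    HasDerivAt (fun u : ℝ => mittagLeffler α 1 (lam * ((u ^ α : ℝ) : ℂ)))
      (∑' k, mlDTerm α lam k τ) τ := by
  set m := τ / 2 with hm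
  set R := τ + 1 with hR
  have hm0 : 0 < m := by positivity
  have hsub : Set.Ioo m R ⊆ Set.Icc m R := Set.Ioo_subset_Icc_self
  have husum : Summable fun k : ℕ =>
      α / m * ((‖lam‖ * R ^ α) ^ k * (k + 1) / Real.Gamma (α * k + 1)) :=
    (ml_summable_aux α hα₀ (‖lam‖ * R ^ α) (by positivity)).mul_left _
  refine hasDerivAt_of_tendstoUniformlyOn
    (f := fun n u => ∑ k ∈ Finset.range n, mlTerm α lam k u)
    (f' := fun n u => ∑ k ∈ Finset.range n, mlDTerm α lam k u)
    (g' := fun u => ∑' k, mlDTerm α lam k u)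
    (l := (Filter.atTop : Filter ℕ))
    (isOpen_Ioo (a := m) (b := R)) ?_ ?_ ?_ ?_
  · apply tendstoUniformlyOn_tsum_nat husum
    intro k u hu
    exact mlDTerm_bound α hα₀ lam k hm0 (hsub hu).1 (hsub hu).2
  · filter_upwards with n u hu
    apply HasDerivAt.fun_sum
    intro k _
    exact mlTerm_hasDerivAt α hα₀ lam k (hm0.trans hu.1)
  · intro u hu
    have hu0 : 0 < u := hm0.trans hu.1
    rw [ml_eq_tsum α lam hu0.le]
    exact (summable_mlTerm α hα₀ lam hu0.le).hasSum.tendsto_sum_nat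
  · constructor
    · rw [hm]; linarith
    · rw [hR]; linarith
lemma beta_integrable {p q a : ℝ} (hp : 0 < p) (hq : 0 < q) (ha : 0 < a) :
    IntervalIntegrable (fun τ => τ ^ (p - 1) * (a - τ) ^ (q - 1)) MeasureTheory.volume 0 a := by
  have h1 : IntervalIntegrable (fun τ => τ ^ (p - 1) * (a - τ) ^ (q - 1))
      MeasureTheory.volume 0 (a / 2) := by
    apply IntervalIntegrable.mul_continuousOn (intervalIntegrable_rpow' (by linarith))
    apply ContinuousOn.rpow_const
    · exact (continuous_const.sub continuous_id).continuousOn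
    · intro τ hτ
      rw [Set.uIcc_of_le (by linarith)] at hτ
      left
      have := hτ.2
      intro h; rw [sub_eq_zero] at h; rw [← h] at this; linarith
  have h2 : IntervalIntegrable (fun τ => τ ^ (p - 1) * (a - τ) ^ (q - 1))
      MeasureTheory.volume (a / 2) a := by
    have base : IntervalIntegrable (fun τ : ℝ => τ ^ (q - 1)) MeasureTheory.volume 0 (a / 2) :=
      intervalIntegrable_rpow' (by linarith)
    have comp := base.comp_sub_left a
    simp only [sub_zero] at comp
    -- comp : IntervalIntegrable (fun x => (a - x) ^ (q-1)) volume (a - a/2) a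
    have hmm : a - a / 2 = a / 2 := by ring
    rw [hmm] at comp
    apply IntervalIntegrable.continuousOn_mul comp.symm
    apply ContinuousOn.rpow_const continuous_id.continuousOn
    intro τ hτ
    rw [Set.uIcc_of_le (by linarith)] at hτ
    left
    simp only [id_eq]
    have := hτ.1; intro h; rw [h] at this; linarith
  exact h1.trans h2

lemma beta_value {p q a : ℝ} (hp : 0 < p) (hq : 0 < q) (ha : 0 < a) :
    ∫ τ in (0:ℝ)..a, τ ^ (p - 1) * (a - τ) ^ (q - 1)
      = a ^ (p + q - 1) * (Real.Gamma p * Real.Gamma q / Real.Gamma (p + q)) := by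
  have key : ((∫ τ in (0:ℝ)..a, τ ^ (p - 1) * (a - τ) ^ (q - 1) : ℝ) : ℂ)
      = ∫ τ in (0:ℝ)..a, (τ : ℂ) ^ ((p : ℂ) - 1) * ((a : ℂ) - τ) ^ ((q : ℂ) - 1) := by
    rw [← intervalIntegral.integral_ofReal]
    rw [intervalIntegral.integral_of_le ha.le, intervalIntegral.integral_of_le ha.le]
    apply MeasureTheory.setIntegral_congr_fun measurableSet_Ioc
    intro τ hτ
    have hτ0 : 0 ≤ τ := hτ.1.le
    have haτ : 0 ≤ a - τ := by linarith [hτ.2]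
    push_cast
    rw [Complex.ofReal_cpow hτ0, Complex.ofReal_cpow haτ]
    push_cast
    ring
  have hpc : 0 < Complex.re (p : ℂ) := by simpa using hp
  have hqc : 0 < Complex.re (q : ℂ) := by simpa using hq
  have beta := Complex.Gamma_mul_Gamma_eq_betaIntegral hpc hqc
  have hΓ : Complex.Gamma ((p : ℂ) + q) ≠ 0 :=
    Complex.Gamma_ne_zero_of_re_pos (by simp; positivity)
  have hbeta : Complex.betaIntegral p q
      = Complex.Gamma p * Complex.Gamma q / Complex.Gamma ((p : ℂ) + q) := by
    rw [eq_div_iff hΓ]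
    linear_combination -beta
  have scaled := Complex.betaIntegral_scaled (p : ℂ) (q : ℂ) ha
  rw [scaled, hbeta] at key
  have ha' : ((a : ℂ)) ^ ((p:ℂ) + (q:ℂ) - 1) = ((a ^ (p + q - 1) : ℝ) : ℂ) := by
    rw [Complex.ofReal_cpow ha.le]; push_cast; ring_nf
  have hpq : ((p:ℂ) + q) = ((p + q : ℝ) : ℂ) := by push_cast; ring
  rw [ha', hpq, Complex.Gamma_ofReal, Complex.Gamma_ofReal, Complex.Gamma_ofReal] at key
  exact_mod_cast key

noncomputable def hTerm (α : ℝ) (lam c : ℂ) (t : ℝ) (k : ℕ) (τ : ℝ) : ℝ :=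
  (c * (lam ^ k / Complex.Gamma ((α:ℂ) * k + 1))).re *
    (α * k * (τ ^ (α * k - 1) * (t - τ) ^ (-α)))

lemma hTerm_integrable (α : ℝ) (hα₀ : 0 < α) (hα₁ : α < 1) (lam c : ℂ) {t : ℝ} (ht : 0 < t)
    (k : ℕ) : MeasureTheory.Integrable (hTerm α lam c t k)
      (MeasureTheory.volume.restrict (Set.Ioo 0 t)) := by
  rcases Nat.eq_zero_or_pos k with rfl | hk
  · have : hTerm α lam c t 0 = fun _ => 0 := by
      funext τ; simp [hTerm]
    rw [this]
    exact MeasureTheory.integrable_zero _ _ _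
  · have hp : (0:ℝ) < α * k := by positivity
    have hbeta := beta_integrable (p := α * k) (q := 1 - α) hp (by linarith) ht
    rw [intervalIntegrable_iff, Set.uIoc_of_le ht.le] at hbeta
    have hIoo := hbeta.mono_set Set.Ioo_subset_Ioc_self
    have heq : hTerm α lam c t k = fun τ =>
        ((c * (lam ^ k / Complex.Gamma ((α:ℂ) * k + 1))).re * (α * k)) *
          (τ ^ (α * k - 1) * (t - τ) ^ ((1 - α) - 1)) := by
      funext τ
      rw [hTerm]
      ring_nf
    rw [heq]
    exact hIoo.const_mul _

lemma hTerm_norm_integral (α : ℝ) (hα₀ : 0 < α) (hα₁ : α < 1) (lam c : ℂ) {t : ℝ} (ht : 0 < t)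
    (k : ℕ) (hk : 0 < k) :
    ∫ τ in Set.Ioo (0:ℝ) t, hTerm α lam c t k τ
      = (c * (lam ^ k / Complex.Gamma ((α:ℂ) * k + 1))).re * (α * k) *
        (t ^ (α * k - α) *
          (Real.Gamma (α * k) * Real.Gamma (1 - α) / Real.Gamma (α * k + (1 - α)))) := by
  have hp : (0:ℝ) < α * k := by positivity
  have hval := beta_value (p := α * k) (q := 1 - α) hp (by linarith) ht
  have h1 : ∫ τ in Set.Ioo (0:ℝ) t, hTerm α lam c t k τ
      = ((c * (lam ^ k / Complex.Gamma ((α:ℂ) * k + 1))).re * (α * k)) *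
        ∫ τ in Set.Ioo (0:ℝ) t, τ ^ (α * k - 1) * (t - τ) ^ ((1 - α) - 1) := by
    rw [← MeasureTheory.integral_const_mul]
    apply MeasureTheory.setIntegral_congr_fun measurableSet_Ioo
    intro τ _
    rw [hTerm]; ring_nf
  rw [h1, ← MeasureTheory.integral_Ioc_eq_integral_Ioo,
    ← intervalIntegral.integral_of_le ht.le, hval]
  have : α * k + (1 - α) - 1 = α * k - α := by ring
  rw [this]

/-- The central computation: the Caputo derivative of `Re (c · E_α(λ t^α))`. -/
lemma main_caputo (α : ℝ) (hα₀ : 0 < α) (hα₁ : α < 1) (lam c : ℂ) (w : ℝ → ℝ)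
    (hw : w = fun τ => (c * mittagLeffler α 1 (lam * ((τ ^ α : ℝ) : ℂ))).re)
    {t : ℝ} (ht : 0 < t) :
    caputoDerivReal α w t
      = (c * (lam * mittagLeffler α 1 (lam * ((t ^ α : ℝ) : ℂ)))).re := by
  have hΓ1α : (0:ℝ) < Real.Gamma (1 - α) := Real.Gamma_pos_of_pos (by linarith)
  -- Step A: derivative of w on (0, t)
  have hderiv : ∀ τ ∈ Set.Ioo (0:ℝ) t, deriv w τ = (c * ∑' k, mlDTerm α lam k τ).re := by
    intro τ hτ
    have h2 := (ml_hasDerivAt α hα₀ lam hτ.1).const_mul c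
    have h3 := Complex.reCLM.hasFDerivAt.comp_hasDerivAt τ h2
    rw [hw]
    simpa [Function.comp_def] using h3.deriv
  -- Step C: pointwise tsum expansion of the integrand
  have hcong : ∀ τ ∈ Set.Ioo (0:ℝ) t,
      (t - τ) ^ (-α) * deriv w τ = ∑' k, hTerm α lam c t k τ := by
    intro τ hτ
    rw [hderiv τ hτ]
    have hsd : Summable fun k => c * mlDTerm α lam k τ :=
      (summable_mlDTerm α hα₀ lam hτ.1).mul_left c
    rw [← tsum_mul_left, Complex.re_tsum hsd, ← tsum_mul_left]
    apply tsum_congr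
    intro k
    have hre : c * mlDTerm α lam k τ
        = ((α * k * τ ^ (α * k - 1) : ℝ) : ℂ) *
          (c * (lam ^ k / Complex.Gamma ((α:ℂ) * k + 1))) := by
      rw [mlDTerm]; ring
    rw [hre, Complex.re_ofReal_mul, hTerm]
    ring
  -- the J integrals
  set J : ℕ → ℝ := fun k => ∫ τ in Set.Ioo (0:ℝ) t, τ ^ (α * k - 1) * (t - τ) ^ ((1 - α) - 1)
    with hJ
  have hJval : ∀ k : ℕ, 0 < k → J k = t ^ (α * k - α) *
      (Real.Gamma (α * k) * Real.Gamma (1 - α) / Real.Gamma (α * k + (1 - α))) := by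
    intro k hk
    have hp : (0:ℝ) < α * k := by positivity
    show (∫ τ in Set.Ioo (0:ℝ) t, τ ^ (α * ↑k - 1) * (t - τ) ^ (1 - α - 1)) = _
    rw [← MeasureTheory.integral_Ioc_eq_integral_Ioo, ← intervalIntegral.integral_of_le ht.le,
      beta_value hp (by linarith) ht]
    have : α * k + (1 - α) - 1 = α * k - α := by ring
    rw [this]
  have hJnonneg : ∀ k : ℕ, 0 ≤ J k := by
    intro k
    apply MeasureTheory.setIntegral_nonneg measurableSet_Ioo
    intro τ hτ
    have h1 : (0:ℝ) ≤ τ := hτ.1.le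
    have h2 : (0:ℝ) ≤ t - τ := by linarith [hτ.2]
    positivity
  -- norm integrals
  have hnormint : ∀ k : ℕ, (∫ τ in Set.Ioo (0:ℝ) t, ‖hTerm α lam c t k τ‖)
      = |(c * (lam ^ k / Complex.Gamma ((α:ℂ) * k + 1))).re * (α * k)| * J k := by
    intro k
    rw [hJ, ← MeasureTheory.integral_const_mul]
    apply MeasureTheory.setIntegral_congr_fun measurableSet_Ioo
    intro τ hτ
    have h1 : (0:ℝ) < τ := hτ.1
    have h2 : (0:ℝ) < t - τ := by linarith [hτ.2]
    dsimp only
    rw [Real.norm_eq_abs, hTerm]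
    have hg : (0:ℝ) ≤ α * k * (τ ^ (α * k - 1) * (t - τ) ^ (-α)) := by positivity
    rw [show (c * (lam ^ k / Complex.Gamma ((α:ℂ) * k + 1))).re *
        (α * ↑k * (τ ^ (α * ↑k - 1) * (t - τ) ^ (-α)))
      = ((c * (lam ^ k / Complex.Gamma ((α:ℂ) * k + 1))).re * (α * ↑k)) *
        (τ ^ (α * ↑k - 1) * (t - τ) ^ (-α)) from by ring]
    rw [abs_mul, abs_of_nonneg (by positivity : (0:ℝ) ≤ τ ^ (α * ↑k - 1) * (t - τ) ^ (-α))]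
    have : ((1:ℝ) - α) - 1 = -α := by ring
    rw [this]
  -- the summable majorant
  set u : ℕ → ℝ := fun k => ‖lam‖ ^ k * t ^ (α * k - α) / Real.Gamma (α * k - α + 1) with hu
  have hu_sum : Summable u := by
    rw [← summable_nat_add_iff 1]
    apply Summable.of_nonneg_of_le
    · intro k
      have : (0:ℝ) < Real.Gamma (α * (k+1 : ℕ) - α + 1) := by
        apply Real.Gamma_pos_of_pos; push_cast; nlinarith
      positivity
    · intro k
      show ‖lam‖ ^ (k+1) * t ^ (α * (k+1 : ℕ) - α) / Real.Gamma (α * (k+1 : ℕ) - α + 1)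
        ≤ ‖lam‖ * ((‖lam‖ * t ^ α) ^ k * (k + 1) / Real.Gamma (α * k + 1))
      have e1 : α * ((k+1 : ℕ) : ℝ) - α = α * k := by push_cast; ring
      rw [e1]
      have e2 : t ^ (α * (k:ℕ)) = (t ^ α) ^ k := by
        rw [Real.rpow_mul ht.le, Real.rpow_natCast]
      rw [e2, pow_succ]
      have hΓ : (0:ℝ) < Real.Gamma (α * k + 1) := gamma_pos α hα₀ k
      have key : ‖lam‖ ^ k * ‖lam‖ * (t ^ α) ^ k ≤ ‖lam‖ * ((‖lam‖ * t ^ α) ^ k * (k + 1)) := by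
        calc ‖lam‖ ^ k * ‖lam‖ * (t ^ α) ^ k = ‖lam‖ * ((‖lam‖ * t ^ α) ^ k * 1) := by
              rw [mul_pow]; ring
          _ ≤ ‖lam‖ * ((‖lam‖ * t ^ α) ^ k * (↑k + 1)) := by
              apply mul_le_mul_of_nonneg_left _ (norm_nonneg lam)
              apply mul_le_mul_of_nonneg_left (by linarith [Nat.cast_nonneg (α := ℝ) k])
                (by positivity)
      rw [mul_div_assoc']
      rw [div_le_div_iff₀ hΓ hΓ]
      exact mul_le_mul_of_nonneg_right key hΓ.le
    · exact (ml_summable_aux α hα₀ (‖lam‖ * t ^ α) (by positivity)).mul_left ‖lam‖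
  -- summability of norm integrals
  have hbound : ∀ k : ℕ, (∫ τ in Set.Ioo (0:ℝ) t, ‖hTerm α lam c t k τ‖)
      ≤ (‖c‖ * Real.Gamma (1 - α)) * u k := by
    intro k
    rcases Nat.eq_zero_or_pos k with rfl | hk
    · rw [hnormint 0]
      simp only [Nat.cast_zero, mul_zero, abs_zero, zero_mul]
      have hg1 : (0:ℝ) < Real.Gamma (α * (0:ℕ) - α + 1) := by
        apply Real.Gamma_pos_of_pos; push_cast; linarith
      have : (0:ℝ) ≤ u 0 := by
        rw [hu]; positivity
      positivity
    · rw [hnormint k, hJval k hk]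
      have hp : (0:ℝ) < α * k := by positivity
      have hΓk : Real.Gamma (α * k + 1) = α * k * Real.Gamma (α * k) :=
        Real.Gamma_add_one hp.ne'
      have hΓkpos : (0:ℝ) < Real.Gamma (α * k) := Real.Gamma_pos_of_pos hp
      have hΓ1 : (0:ℝ) < Real.Gamma (α * k + 1) := gamma_pos α hα₀ k
      have harg : α * (k:ℝ) + (1 - α) = α * k - α + 1 := by ring
      have hΓspos : (0:ℝ) < Real.Gamma (α * k - α + 1) := by
        apply Real.Gamma_pos_of_pos
        have : (1:ℝ) ≤ k := by exact_mod_cast hk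
        nlinarith
      have hcoef : |(c * (lam ^ k / Complex.Gamma ((α:ℂ) * k + 1))).re|
          ≤ ‖c‖ * ‖lam‖ ^ k / Real.Gamma (α * k + 1) := by
        calc |(c * (lam ^ k / Complex.Gamma ((α:ℂ) * k + 1))).re|
            ≤ ‖c * (lam ^ k / Complex.Gamma ((α:ℂ) * k + 1))‖ := Complex.abs_re_le_norm _
          _ = ‖c‖ * ‖lam‖ ^ k / Real.Gamma (α * k + 1) := by
              rw [norm_mul, norm_div, norm_pow, gammaC_eq, Complex.norm_real,
                Real.norm_eq_abs, abs_of_nonneg hΓ1.le, mul_div_assoc]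
      have hX : (0:ℝ) ≤ t ^ (α * k - α) *
          (Real.Gamma (α * k) * Real.Gamma (1 - α) / Real.Gamma (α * k + (1 - α))) := by
        rw [harg]; positivity
      rw [abs_mul, abs_of_nonneg (by positivity : (0:ℝ) ≤ α * (k:ℝ))]
      calc |(c * (lam ^ k / Complex.Gamma ((α:ℂ) * k + 1))).re| * (α * k) *
            (t ^ (α * k - α) *
              (Real.Gamma (α * k) * Real.Gamma (1 - α) / Real.Gamma (α * k + (1 - α))))
          ≤ (‖c‖ * ‖lam‖ ^ k / Real.Gamma (α * k + 1)) * (α * k) *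
            (t ^ (α * k - α) *
              (Real.Gamma (α * k) * Real.Gamma (1 - α) / Real.Gamma (α * k + (1 - α)))) := by
            apply mul_le_mul_of_nonneg_right _ hX
            exact mul_le_mul_of_nonneg_right hcoef (by positivity)
        _ = (‖c‖ * Real.Gamma (1 - α)) * u k := by
            rw [hu, harg]
            simp only
            rw [hΓk]
            field_simp
  have hsum : Summable (fun k => ∫ τ in Set.Ioo (0:ℝ) t, ‖hTerm α lam c t k τ‖) := by
    apply Summable.of_nonneg_of_le _ hbound (hu_sum.mul_left _)
    intro k
    exact MeasureTheory.integral_nonneg (fun τ => norm_nonneg _)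
  -- the swap
  have hswap := MeasureTheory.integral_tsum_of_summable_integral_norm
    (fun k => hTerm_integrable α hα₀ hα₁ lam c ht k) hsum
  -- summability of the integrals
  have hIsum : Summable (fun k => ∫ τ in Set.Ioo (0:ℝ) t, hTerm α lam c t k τ) := by
    apply Summable.of_norm_bounded hsum
    intro k
    exact MeasureTheory.norm_integral_le_integral_norm _
  -- rewrite the Caputo integral
  rw [caputoDerivReal, intervalIntegral.integral_of_le ht.le,
    MeasureTheory.integral_Ioc_eq_integral_Ioo,
    MeasureTheory.setIntegral_congr_fun measurableSet_Ioo (fun τ hτ => hcong τ hτ),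
    ← hswap, Summable.tsum_eq_zero_add hIsum]
  -- the k = 0 integral vanishes
  have hI0 : (∫ τ in Set.Ioo (0:ℝ) t, hTerm α lam c t 0 τ) = 0 := by
    have : hTerm α lam c t 0 = fun _ => 0 := by funext τ; simp [hTerm]
    rw [this]
    simp
  rw [hI0, zero_add]
  -- value of each integral for k ≥ 1
  have hIval : ∀ k : ℕ, (∫ τ in Set.Ioo (0:ℝ) t, hTerm α lam c t (k+1) τ)
      = Real.Gamma (1 - α) * ((c * lam) * mlTerm α lam k t).re := by
    intro k
    rw [hTerm_norm_integral α hα₀ hα₁ lam c ht (k+1) k.succ_pos]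
    have hp : (0:ℝ) < α * ((k+1 : ℕ) : ℝ) := by positivity
    have hΓrec : Real.Gamma (α * ((k+1:ℕ):ℝ) + 1)
        = α * ((k+1:ℕ):ℝ) * Real.Gamma (α * ((k+1:ℕ):ℝ)) := Real.Gamma_add_one hp.ne'
    have hΓ1 : (0:ℝ) < Real.Gamma (α * ((k+1:ℕ):ℝ) + 1) := gamma_pos α hα₀ (k+1)
    have hΓB : (0:ℝ) < Real.Gamma (α * ((k+1:ℕ):ℝ)) := Real.Gamma_pos_of_pos hp
    have harg2 : α * (((k+1):ℕ):ℝ) + (1 - α) = α * k + 1 := by push_cast; ring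
    have harg3 : α * (((k+1):ℕ):ℝ) - α = α * k := by push_cast; ring
    have hΓk1 : (0:ℝ) < Real.Gamma (α * (k:ℝ) + 1) := gamma_pos α hα₀ k
    -- rewrite the complex re parts as real multiples of (c * lam^(k+1)).re
    have hre1 : (c * (lam ^ (k+1) / Complex.Gamma ((α:ℂ) * ((k+1):ℕ) + 1))).re
        = (c * lam ^ (k+1)).re / Real.Gamma (α * ((k+1:ℕ):ℝ) + 1) := by
      rw [gammaC_eq α (k+1)]
      rw [show c * (lam ^ (k+1) / ((Real.Gamma (α * ((k+1):ℕ) + 1) : ℝ) : ℂ))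
        = ((Real.Gamma (α * ((k+1):ℕ) + 1) : ℝ) : ℂ)⁻¹ * (c * lam ^ (k+1)) from by
          field_simp]
      rw [← Complex.ofReal_inv, Complex.re_ofReal_mul]
      rw [inv_mul_eq_div]
    have hre2 : ((c * lam) * mlTerm α lam k t).re
        = (c * lam ^ (k+1)).re * (t ^ (α * k) / Real.Gamma (α * (k:ℝ) + 1)) := by
      rw [mlTerm, gammaC_eq α k]
      rw [show c * lam * (lam ^ k * ((t ^ (α * (k:ℕ)) : ℝ) : ℂ) /
            ((Real.Gamma (α * (k:ℕ) + 1) : ℝ) : ℂ))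
        = (((t ^ (α * (k:ℕ)) / Real.Gamma (α * (k:ℕ) + 1) : ℝ)) : ℂ) * (c * lam ^ (k+1))
        from by push_cast; field_simp; ring]
      rw [Complex.re_ofReal_mul]
      ring
    rw [hre1, hre2, harg2, harg3, hΓrec]
    field_simp
  -- sum the series
  have hsum2 : Summable fun k => (c * lam) * mlTerm α lam k t :=
    (summable_mlTerm α hα₀ lam ht.le).mul_left (c * lam)
  calc (1 / Real.Gamma (1 - α)) *
        ∑' k, ∫ τ in Set.Ioo (0:ℝ) t, hTerm α lam c t (k+1) τ
      = (1 / Real.Gamma (1 - α)) *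
        ∑' k, Real.Gamma (1 - α) * ((c * lam) * mlTerm α lam k t).re := by
        rw [tsum_congr hIval]
    _ = (1 / Real.Gamma (1 - α)) * (Real.Gamma (1 - α) *
        ∑' k, ((c * lam) * mlTerm α lam k t).re) := by rw [tsum_mul_left]
    _ = ∑' k, ((c * lam) * mlTerm α lam k t).re := by
        field_simp
    _ = ((c * lam) * ∑' k, mlTerm α lam k t).re := by
        rw [← Complex.re_tsum hsum2, tsum_mul_left]
    _ = (c * (lam * mittagLeffler α 1 (lam * ((t ^ α : ℝ) : ℂ)))).re := by
        rw [ml_eq_tsum α lam ht.le, mul_assoc]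

end AuxiliaryLemmas

lemma ml_at_zero (α : ℝ) (hα₀ : 0 < α) (lam : ℂ) :
    mittagLeffler α 1 (lam * (((0:ℝ) ^ α : ℝ) : ℂ)) = 1 := by
  rw [Real.zero_rpow hα₀.ne']
  simp only [Complex.ofReal_zero, mul_zero, mittagLeffler]
  rw [tsum_eq_single 0]
  · norm_num [Complex.Gamma_one]
  · intro k hk
    rw [zero_pow hk, zero_div]

/-- For `0 < α < 1`, `λ = a + ib` with `b ≠ 0`, the trajectory
`x(t) = C₁ Re(E_α(λt^α)) + C₂ Im(E_α(λt^α))`,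
`y(t) = −C₁ Im(E_α(λt^α)) + C₂ Re(E_α(λt^α))` satisfies `x(0) = C₁`, `y(0) = C₂`, and
for `t > 0`: `(₀^C D_t^α x)(t) = a x(t) + b y(t)` and
`(₀^C D_t^α y)(t) = −b x(t) + a y(t)`. -/
theorem caputo_complex_pair_solution (α : ℝ) (hα₀ : 0 < α) (hα₁ : α < 1)
    (a b : ℝ) (hb : b ≠ 0) (C₁ C₂ : ℝ) (lam : ℂ)
    (hlam : lam = (a : ℂ) + (b : ℂ) * Complex.I)
    (x y : ℝ → ℝ)
    (hx : ∀ t : ℝ, x t =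
      C₁ * (mittagLeffler α 1 (lam * ((t ^ α : ℝ) : ℂ))).re +
        C₂ * (mittagLeffler α 1 (lam * ((t ^ α : ℝ) : ℂ))).im)
    (hy : ∀ t : ℝ, y t =
      -C₁ * (mittagLeffler α 1 (lam * ((t ^ α : ℝ) : ℂ))).im +
        C₂ * (mittagLeffler α 1 (lam * ((t ^ α : ℝ) : ℂ))).re) :
    x 0 = C₁ ∧ y 0 = C₂ ∧
      ∀ t : ℝ, 0 < t →
        caputoDerivReal α x t = a * x t + b * y t ∧
          caputoDerivReal α y t = -b * x t + a * y t := by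
  have hml0 := ml_at_zero α hα₀ lam
  refine ⟨?_, ?_, ?_⟩
  · rw [hx 0, hml0]; simp
  · rw [hy 0, hml0]; simp
  · intro t ht
    set cx : ℂ := (C₁ : ℂ) - (C₂ : ℂ) * Complex.I with hcx
    set cy : ℂ := (C₂ : ℂ) + (C₁ : ℂ) * Complex.I with hcy
    have hwx : x = fun τ => (cx * mittagLeffler α 1 (lam * ((τ ^ α : ℝ) : ℂ))).re := by
      funext τ
      rw [hx τ, hcx]
      simp [Complex.mul_re]
      try ring
    have hwy : y = fun τ => (cy * mittagLeffler α 1 (lam * ((τ ^ α : ℝ) : ℂ))).re := by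
      funext τ
      rw [hy τ, hcy]
      simp [Complex.mul_re]
      try ring
    have hcapx := main_caputo α hα₀ hα₁ lam cx x hwx ht
    have hcapy := main_caputo α hα₀ hα₁ lam cy y hwy ht
    set z : ℂ := mittagLeffler α 1 (lam * ((t ^ α : ℝ) : ℂ)) with hz
    have hre : lam.re = a := by rw [hlam]; simp
    have him : lam.im = b := by rw [hlam]; simp
    constructor
    · rw [hcapx, hx t, hy t]
      simp only [Complex.mul_re, Complex.mul_im, hcx, Complex.sub_re, Complex.sub_im,
        Complex.mul_re, Complex.mul_im, Complex.ofReal_re, Complex.ofReal_im,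
        Complex.I_re, Complex.I_im, hre, him]
      ring
    · rw [hcapy, hx t, hy t]
      simp only [Complex.mul_re, Complex.mul_im, hcy, Complex.add_re, Complex.add_im,
        Complex.mul_re, Complex.mul_im, Complex.ofReal_re, Complex.ofReal_im,
        Complex.I_re, Complex.I_im, hre, him]
      ring
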